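/- Let g = r_{3,λ} ⊕ k be the 4-dimensional Lie algebra over a field k of characteristic zero with basis e₁,e₂,e₃,e₄ and nonzero brackets [e₁,e₂] = e₂, [e₁,e₃] = λe₃, where λ ≠ 0. Then g admits a nondegenerate 2-cocycle (symplectic structure) if and only if λ = -1. -/

import Mathlib

set_option maxHeartbeats 1000000


/-- The Lie algebra `r_{3,λ} ⊕ k` (basis `e₁,…,e₄`, nonzero brackets `[e₁,e₂] = e₂`,
`[e₁,e₃] = λ e₃`, with `λ ≠ 0`) admits a symplectic structure (a nondegenerate
2-cocycle) if and only if `λ = -1`. -/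
theorem r3lam_symplectic_iff (k g : Type*) [Field k] [CharZero k]
    [LieRing g] [LieAlgebra k g]
    (lam : k) (hlam : lam ≠ 0)
    (e : Module.Basis (Fin 4) k g)
    (h12 : ⁅e 0, e 1⁆ = e 1) (h13 : ⁅e 0, e 2⁆ = lam • e 2)
    (h14 : ⁅e 0, e 3⁆ = 0) (h23 : ⁅e 1, e 2⁆ = 0)
    (h24 : ⁅e 1, e 3⁆ = 0) (h34 : ⁅e 2, e 3⁆ = 0) :
    (∃ ω : g →ₗ[k] g →ₗ[k] k,
      (∀ x y : g, ω x y = - ω y x) ∧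
      (∀ x y z : g, ω ⁅x, y⁆ z - ω ⁅x, z⁆ y + ω ⁅y, z⁆ x = 0) ∧
      (∀ x : g, (∀ y : g, ω x y = 0) → x = 0)) ↔ lam = -1 := by
  constructor
  · rintro ⟨ω, hskew, hcoc, hnd⟩
    by_contra hne
    have hself : ∀ x : g, ω x x = 0 := fun x => by
      have h := hskew x x
      have h2 : (2 : k) * ω x x = 0 := by linear_combination h
      exact (mul_eq_zero.mp h2).resolve_left two_ne_zero
    have ha13 : ω (e 1) (e 3) = 0 := by
      have := hcoc (e 0) (e 1) (e 3)
      rw [h12, h14, h24] at this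
      simpa using this
    have ha23 : ω (e 2) (e 3) = 0 := by
      have := hcoc (e 0) (e 2) (e 3)
      rw [h13, h14, h34] at this
      simp [map_smul, smul_eq_mul] at this
      rcases this with h | h
      · exact absurd h hlam
      · exact h
    have ha12 : ω (e 1) (e 2) = 0 := by
      have := hcoc (e 0) (e 1) (e 2)
      rw [h12, h13, h23] at this
      simp only [map_smul, LinearMap.smul_apply, smul_eq_mul, map_zero, LinearMap.zero_apply, add_zero] at this
      rw [hskew (e 2) (e 1)] at this
      have h1 : (1 + lam) * ω (e 1) (e 2) = 0 := by linear_combination this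
      have h2 : (1 + lam) ≠ 0 := fun h => hne (by linear_combination h)
      exact (mul_eq_zero.mp h1).resolve_left h2
    set a01 := ω (e 0) (e 1) with ha01def
    set a03 := ω (e 0) (e 3) with ha03def
    have hxmap : ω (a03 • e 1 - a01 • e 3) = 0 := by
      apply e.ext
      intro i
      fin_cases i <;>
        simp [map_sub, map_smul, smul_eq_mul, hself, ha13, ha12, ha23,
          hskew (e 1) (e 0), hskew (e 3) (e 0), hskew (e 3) (e 1), hskew (e 3) (e 2),
          ← ha01def, ← ha03def] <;> ring
    have hx0 : (a03 • e 1 - a01 • e 3 : g) = 0 :=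
      hnd _ fun y => by rw [hxmap]; rfl
    have h03 : a03 = 0 := by
      have := congrArg (fun z => e.repr z 1) hx0
      simpa [map_sub, map_smul, Finsupp.single_apply] using this
    have h01 : a01 = 0 := by
      have := congrArg (fun z => e.repr z 3) hx0
      simpa [map_sub, map_smul, Finsupp.single_apply] using this
    have he1map : ω (e 1) = 0 := by
      apply e.ext
      intro i
      fin_cases i <;>
        simp [hself, ha13, ha12, hskew (e 1) (e 0), ← ha01def, h01]
    have : (e 1 : g) = 0 := hnd _ fun y => by rw [he1map]; rfl
    exact e.ne_zero 1 this
  · intro hl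
    -- the symplectic form: ω x y = x₀y₃ - x₃y₀ + x₁y₂ - x₂y₁
    refine ⟨LinearMap.mk₂ k
      (fun x y => e.repr x 0 * e.repr y 3 - e.repr x 3 * e.repr y 0 +
        e.repr x 1 * e.repr y 2 - e.repr x 2 * e.repr y 1)
      (fun x x' y => by simp [map_add]; ring)
      (fun c x y => by simp [map_smul, smul_eq_mul]; ring)
      (fun x y y' => by simp [map_add]; ring)
      (fun c x y => by simp [map_smul, smul_eq_mul]; ring), ?_, ?_, ?_⟩
    · intro x y
      simp only [LinearMap.mk₂_apply]
      ring
    · intro x y z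
      have key : ∀ u v : g, ⁅u, v⁆ =
          (e.repr u 0 * e.repr v 1 - e.repr u 1 * e.repr v 0) • e 1 +
          (lam * (e.repr u 0 * e.repr v 2 - e.repr u 2 * e.repr v 0)) • e 2 := by
        intro u v
        have h21 : ⁅e 1, e 0⁆ = -e 1 := by rw [← lie_skew, h12]
        have h31 : ⁅e 2, e 0⁆ = -(lam • e 2) := by rw [← lie_skew, h13]
        have h41 : ⁅e 3, e 0⁆ = 0 := by rw [← lie_skew, h14, neg_zero]
        have h32 : ⁅e 2, e 1⁆ = 0 := by rw [← lie_skew, h23, neg_zero]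
        have h42 : ⁅e 3, e 1⁆ = 0 := by rw [← lie_skew, h24, neg_zero]
        have h43 : ⁅e 3, e 2⁆ = 0 := by rw [← lie_skew, h34, neg_zero]
        have hu := e.sum_repr u
        have hv := e.sum_repr v
        conv_lhs => rw [← hu, ← hv]
        rw [Fin.sum_univ_four, Fin.sum_univ_four]
        simp only [add_lie, lie_add, smul_lie, lie_smul, h12, h13, h14, h23, h24,
          h34, h21, h31, h41, h42, h32, h43, lie_self, smul_zero, smul_neg,
          add_zero, zero_add, smul_smul]
        module
      have r0 : ∀ u v : g, e.repr ⁅u, v⁆ 0 = 0 := fun u v => by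
        rw [key u v]; simp
      have r3 : ∀ u v : g, e.repr ⁅u, v⁆ 3 = 0 := fun u v => by
        rw [key u v]
        simp [Finsupp.single_apply, show ¬((1:Fin 4) = 3) by decide,
          show ¬((2:Fin 4) = 3) by decide]
      have r1 : ∀ u v : g, e.repr ⁅u, v⁆ 1 =
          e.repr u 0 * e.repr v 1 - e.repr u 1 * e.repr v 0 := fun u v => by
        rw [key u v]
        simp [Finsupp.single_apply, show ¬((2:Fin 4) = 1) by decide]
      have r2 : ∀ u v : g, e.repr ⁅u, v⁆ 2 =
          lam * (e.repr u 0 * e.repr v 2 - e.repr u 2 * e.repr v 0) := fun u v => by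
        rw [key u v]
        simp [Finsupp.single_apply, show ¬((1:Fin 4) = 2) by decide]
      simp only [LinearMap.mk₂_apply, r0, r1, r2, r3]
      subst hl
      ring
    · intro x hx
      have h0 : e.repr x 0 = 0 := by
        have := hx (e 3)
        simpa [Finsupp.single_apply] using this
      have h3 : e.repr x 3 = 0 := by
        have := hx (e 0)
        simpa [Finsupp.single_apply] using this
      have h1 : e.repr x 1 = 0 := by
        have := hx (e 2)
        simpa [Finsupp.single_apply, h0, h3] using this
      have h2 : e.repr x 2 = 0 := by
        have := hx (e 1)
        simpa [Finsupp.single_apply, h0, h3] using this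
      have : e.repr x = 0 := by
        ext i
        fin_cases i <;> assumption
      exact e.repr.map_eq_zero_iff.mp this
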